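/- Let (r_1, …, r_a) be a composition of r+1 with a ≥ 2, let (k_{x_1}, …, k_r) ∈ D_{(r_1⋯r_a)}, and set w = Π_2 Π_3 ⋯ Π_a. Let 1 ≤ m ≤ n ≤ r. If n − m + 1 > a − 1, then there exists l with m ≤ l ≤ n such that w(α_l) is a positive root. -/

import Mathlib

open Equiv Finset

/-- The simple reflection `s i = (i, i+1)` (1-based) in `S_{r+1}`, for `1 ≤ i ≤ r`;
the junk value `1` otherwise. -/
def sr (r i : ℕ) : Equiv.Perm (Fin (r + 1)) :=
  if h : 1 ≤ i ∧ i ≤ r then Equiv.swap ⟨i - 1, by omega⟩ ⟨i, by omega⟩ else 1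

/-- The cycle `π_k` with ambient index `i`, i.e. `s_i s_{i-1} ⋯ s_k`
(the identity when `k = i + 1`). -/
def cyc (r i k : ℕ) : Equiv.Perm (Fin (r + 1)) :=
  ((List.range (i + 1 - k)).map fun t => sr r (i - t)).prod

/-- The product `π_{k i} π_{k (i+1)} ⋯ π_{k j}`, the factor `π_{k t}` being the
cycle with ambient index `t`. -/
def cycProd (r : ℕ) (k : ℕ → ℕ) (i j : ℕ) : Equiv.Perm (Fin (r + 1)) :=
  ((List.range' i (j + 1 - i)).map fun t => cyc r t (k t)).prod

/-- Coxeter length of a permutation: the number of inversions. -/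
def lenInv {n : ℕ} (w : Equiv.Perm (Fin n)) : ℕ :=
  (Finset.univ.filter fun p : Fin n × Fin n => p.1 < p.2 ∧ w p.2 < w p.1).card

/-- Partial sums of a (1-based) composition: `psum c j = c 1 + ⋯ + c j`. -/
def psum (c : ℕ → ℕ) (j : ℕ) : ℕ := ∑ i ∈ Finset.Icc 1 j, c i

/-- The transpose partition of `(t 1, …, t b)`: `transp b t j = #{i ∈ [1,b] : t i ≥ j}`. -/
def transp (b : ℕ) (t : ℕ → ℕ) (j : ℕ) : ℕ :=
  ((Finset.Icc 1 b).filter fun i => j ≤ t i).card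

/-- The element of `Fin (r+1)` with value `i` (for `i ≤ r`). -/
def finOf (r i : ℕ) : Fin (r + 1) := ⟨min i r, by omega⟩

/-- `w(α_i)` is a positive root, where `α_i = e_i − e_{i+1}` (1-based), i.e. the
0-based pair `(i-1, i)`; `w(e_c − e_d) = e_{w c} − e_{w d}` is positive iff `w c < w d`. -/
def posRoot (r : ℕ) (w : Equiv.Perm (Fin (r + 1))) (i : ℕ) : Prop :=
  (w (finOf r (i - 1)) : ℕ) < w (finOf r i)

/-- `w(α_i)` is a negative root. -/
def negRoot (r : ℕ) (w : Equiv.Perm (Fin (r + 1))) (i : ℕ) : Prop :=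
  (w (finOf r i) : ℕ) < w (finOf r (i - 1))

/-- `w(α_i)` is a simple root. -/
def simpleRoot (r : ℕ) (w : Equiv.Perm (Fin (r + 1))) (i : ℕ) : Prop :=
  (w (finOf r i) : ℕ) = (w (finOf r (i - 1)) : ℕ) + 1

/-- `w(α_i) = α_j` (as roots: the image pair is `(j-1, j)` in 0-based indices). -/
def eqRoot (r : ℕ) (w : Equiv.Perm (Fin (r + 1))) (i j : ℕ) : Prop :=
  (w (finOf r (i - 1)) : ℕ) = j - 1 ∧ (w (finOf r i) : ℕ) = j

/-- `Π_l Π_{l+1} ⋯ Π_a` for the composition `c` and tuple `k`, where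
`Π_j = π_{k_{x_{j-1}}} ⋯ π_{k_{x_j - 1}}` and `x_j = psum c j`. -/
def tailProd (r a : ℕ) (c k : ℕ → ℕ) (l : ℕ) : Equiv.Perm (Fin (r + 1)) :=
  ((List.range' l (a + 1 - l)).map fun j => cycProd r k (psum c (j - 1)) (psum c j - 1)).prod

/-- The subgroup `W(P)`: generated by the simple reflections `s i` with `i ∈ [1,r]`
avoiding the partial sums `x 1, …, x (a-1)` of the composition `c`. -/
def WP (r a : ℕ) (c : ℕ → ℕ) : Subgroup (Equiv.Perm (Fin (r + 1))) :=
  Subgroup.closure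
    {g | ∃ i, 1 ≤ i ∧ i ≤ r ∧ (∀ j, 1 ≤ j → j ≤ a - 1 → i ≠ psum c j) ∧ g = sr r i}

/-- `α_i ∈ Δ_λ` for the composition `λ = (p 1, …, p m)` of `r+1`. -/
def inDelta (r m : ℕ) (p : ℕ → ℕ) (i : ℕ) : Prop :=
  1 ≤ i ∧ i ≤ r ∧ ∀ j, 1 ≤ j → j ≤ m - 1 → i ≠ psum p j

/-- The left coset `H · g`. -/
def cosetOf {G : Type*} [Group G] (H : Subgroup G) (g : G) : Set G :=
  {x | ∃ h ∈ H, x = h * g}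

/-- The (0-based) positions `u` and `v` lie in the same block of the composition
`μ^⊤ = transp b t`; a negative root `e_c − e_d` lies in `Φ⁻_{μ^⊤}` iff its two
indices lie in the same block. -/
def sameBlock (b : ℕ) (t : ℕ → ℕ) (u v : ℕ) : Prop :=
  ∃ j, 1 ≤ j ∧ j ≤ t 1 ∧
    psum (transp b t) (j - 1) ≤ u ∧ u < psum (transp b t) j ∧
    psum (transp b t) (j - 1) ≤ v ∧ v < psum (transp b t) j

lemma sr_apply (r kk : ℕ) (h1 : 1 ≤ kk) (h2 : kk ≤ r) (p : Fin (r+1)) :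
    ((sr r kk) p : ℕ) = if (p:ℕ) = kk - 1 then kk else if (p:ℕ) = kk then kk - 1 else (p:ℕ) := by
  have hp := p.isLt
  unfold sr
  rw [dif_pos ⟨h1, h2⟩, Equiv.swap_apply_def]
  split_ifs with ha hb hc hd he <;>
    first
      | rfl
      | (simp only [Fin.ext_iff] at * <;> omega)

lemma cyc_top (r i : ℕ) : cyc r i (i+1) = 1 := by
  unfold cyc
  simp

lemma cyc_succ (r i kk : ℕ) (h : kk ≤ i) : cyc r i kk = cyc r i (kk+1) * sr r kk := by
  unfold cyc
  have h1 : i + 1 - kk = (i - kk) + 1 := by omega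
  have h2 : i + 1 - (kk+1) = i - kk := by omega
  rw [h1, h2, List.range_succ, List.map_append, List.prod_append]
  have h3 : i - (i - kk) = kk := by omega
  simp [h3]

lemma cyc_apply (r i : ℕ) (hi : i ≤ r) : ∀ d kk, 1 ≤ kk → kk ≤ i + 1 → i + 1 - kk = d →
    ∀ p : Fin (r+1), ((cyc r i kk) p : ℕ) =
      if (p:ℕ) + 1 = kk then i
      else if kk ≤ (p:ℕ) ∧ (p:ℕ) ≤ i then (p:ℕ) - 1 else (p:ℕ) := by
  intro d
  induction d with
  | zero =>
    intro kk hk1 hk2 hd p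
    have hp := p.isLt
    have : kk = i + 1 := by omega
    subst this
    rw [cyc_top, Equiv.Perm.one_apply]
    split_ifs <;> omega
  | succ d ih =>
    intro kk hk1 hk2 hd p
    have hp := p.isLt
    have hki : kk ≤ i := by omega
    rw [cyc_succ r i kk hki, Equiv.Perm.mul_apply]
    rw [ih (kk+1) (by omega) (by omega) (by omega) ((sr r kk) p)]
    rw [sr_apply r kk hk1 (by omega) p]
    split_ifs <;> omega
lemma inv_eq_of {n : ℕ} (w : Equiv.Perm (Fin n)) {x y : Fin n} (h : w y = x) : w⁻¹ x = y := by
  rw [← h]; exact w.symm_apply_apply y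

lemma cyc_inv_apply (r i kk : ℕ) (hi : i ≤ r) (hk1 : 1 ≤ kk) (hk2 : kk ≤ i+1) (p : Fin (r+1)) :
    (((cyc r i kk)⁻¹ p : ℕ)) =
      if (p:ℕ) = i then kk - 1
      else if kk - 1 ≤ (p:ℕ) ∧ (p:ℕ) < i then (p:ℕ) + 1 else (p:ℕ) := by
  have hp := p.isLt
  by_cases h1 : (p:ℕ) = i
  · have key : cyc r i kk ⟨kk - 1, by omega⟩ = p := by
      apply Fin.ext
      rw [cyc_apply r i hi (i + 1 - kk) kk hk1 hk2 rfl]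
      simp only [Fin.val_mk] -- ?
      split_ifs <;> omega
    rw [inv_eq_of _ key]
    simp [h1]
  · by_cases h2 : kk - 1 ≤ (p:ℕ) ∧ (p:ℕ) < i
    · have key : cyc r i kk ⟨(p:ℕ) + 1, by omega⟩ = p := by
        apply Fin.ext
        rw [cyc_apply r i hi (i + 1 - kk) kk hk1 hk2 rfl]
        simp only [Fin.val_mk]
        split_ifs <;> omega
      rw [inv_eq_of _ key]
      simp only [Fin.val_mk]
      rw [if_neg h1, if_pos h2]
    · have key : cyc r i kk ⟨(p:ℕ), by omega⟩ = p := by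
        apply Fin.ext
        rw [cyc_apply r i hi (i + 1 - kk) kk hk1 hk2 rfl]
        simp only [Fin.val_mk]
        split_ifs <;> omega
      rw [inv_eq_of _ key]
      simp only [Fin.val_mk]
      rw [if_neg h1, if_neg h2]
lemma cycProd_concat (r : ℕ) (k : ℕ → ℕ) (b e : ℕ) (h : b ≤ e + 1) :
    cycProd r k b (e+1) = cycProd r k b e * cyc r (e+1) (k (e+1)) := by
  unfold cycProd
  have h1 : e + 1 + 1 - b = (e + 1 - b) + 1 := by omega
  rw [h1, List.range'_concat, List.map_append, List.prod_append]
  have h2 : b + 1 * (e + 1 - b) = e + 1 := by omega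
  rw [h2]
  simp

lemma cycProd_empty (r : ℕ) (k : ℕ → ℕ) (b : ℕ) (h : 1 ≤ b) : cycProd r k b (b-1) = 1 := by
  unfold cycProd
  have : b - 1 + 1 - b = 0 := by omega
  rw [this]
  simp

lemma structQ (r b : ℕ) (k : ℕ → ℕ) (hb : 1 ≤ b) :
    ∀ e, b - 1 ≤ e → e ≤ r →
    (∀ i, b ≤ i → i ≤ e → 1 ≤ k i ∧ k i ≤ i + 1) →
    (∀ i j, b ≤ i → i < j → j ≤ e → k i < k j) →
    (∀ p : Fin (r+1), e < (p:ℕ) → ((cycProd r k b e) p : ℕ) = (p:ℕ)) ∧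
    (∀ u (p : Fin (r+1)), b ≤ u → u ≤ e → (p:ℕ) + 1 = k u → ((cycProd r k b e) p : ℕ) = u) ∧
    (∀ u v : Fin (r+1), (u:ℕ) < (v:ℕ) → (v:ℕ) < b →
      ((cycProd r k b e)⁻¹ u : ℕ) < ((cycProd r k b e)⁻¹ v : ℕ) ∧
      ((cycProd r k b e)⁻¹ v : ℕ) ≤ e) := by
  intro e he
  induction e, he using Nat.le_induction with
  | base =>
    intro her hk hinc
    rw [cycProd_empty r k b hb]
    refine ⟨fun p _ => by simp, fun u p hu1 hu2 _ => by omega, fun u v huv hvb => ?_⟩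
    simp only [inv_one, Equiv.Perm.one_apply]
    exact ⟨huv, by omega⟩
  | succ e he ih =>
    intro her hk hinc
    have hkk := hk (e+1) (by omega) le_rfl
    obtain ⟨ih1, ih4, ih2⟩ := ih (by omega) (fun i h1 h2 => hk i h1 (by omega))
      (fun i j h1 h2 h3 => hinc i j h1 h2 (by omega))
    rw [cycProd_concat r k b e (by omega)]
    set kk := k (e+1) with hkkdef
    have hcyc := fun p => cyc_apply r (e+1) (by omega) (e + 2 - kk) kk hkk.1 hkk.2 rfl p
    have hcycinv := fun p => cyc_inv_apply r (e+1) kk (by omega) hkk.1 hkk.2 p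
    refine ⟨?_, ?_, ?_⟩
    · intro p hp
      have hplt := p.isLt
      rw [Equiv.Perm.mul_apply]
      have h1 : cyc r (e+1) kk p = p := by
        apply Fin.ext
        rw [hcyc p]
        split_ifs <;> omega
      rw [h1]
      exact ih1 p (by omega)
    · intro u p hu1 hu2 hpk
      have hplt := p.isLt
      rw [Equiv.Perm.mul_apply]
      rcases Nat.lt_or_ge u (e+1) with hue | hue
      · have hkult : k u < kk := hinc u (e+1) hu1 (by omega) le_rfl
        have h1 : cyc r (e+1) kk p = p := by
          apply Fin.ext
          rw [hcyc p]
          split_ifs <;> omega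
        rw [h1]
        exact ih4 u p hu1 (by omega) hpk
      · have hue' : u = e + 1 := by omega
        subst hue'
        have h1 : ((cyc r (e+1) kk) p : ℕ) = e + 1 := by
          rw [hcyc p]
          split_ifs <;> omega
        have := ih1 ((cyc r (e+1) kk) p) (by omega)
        omega
    · intro u v huv hvb
      rw [mul_inv_rev, Equiv.Perm.mul_apply, Equiv.Perm.mul_apply]
      obtain ⟨hlt, hle⟩ := ih2 u v huv hvb
      set x := (cycProd r k b e)⁻¹ u
      set y := (cycProd r k b e)⁻¹ v
      rw [hcycinv x, hcycinv y]
      constructor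
      · split_ifs <;> omega
      · split_ifs <;> omega
lemma psum_mono (c : ℕ → ℕ) {j j' : ℕ} (h : j ≤ j') : psum c j ≤ psum c j' := by
  unfold psum
  exact Finset.sum_le_sum_of_subset (Finset.Icc_subset_Icc le_rfl h)

lemma psum_succ (c : ℕ → ℕ) (j : ℕ) : psum c (j+1) = psum c j + c (j+1) := by
  unfold psum
  rw [Finset.sum_Icc_succ_top (by omega)]

lemma psum_one (c : ℕ → ℕ) : psum c 1 = c 1 := by
  unfold psum; simp

lemma chainK (b e : ℕ) (k : ℕ → ℕ) (h : ∀ i, b ≤ i → i + 1 ≤ e → k i < k (i+1)) :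
    ∀ j i, b ≤ i → i < j → j ≤ e → k i < k j := by
  intro j
  induction j with
  | zero => omega
  | succ j ihj =>
    intro i hbi hij hje
    rcases Nat.lt_or_ge i j with h1 | h1
    · exact lt_trans (ihj i hbi h1 (by omega)) (h j (by omega) hje)
    · have : i = j := by omega
      subst this
      exact h i hbi hje

lemma tailProd_cons (r a : ℕ) (c k : ℕ → ℕ) (l : ℕ) (h : l ≤ a) :
    tailProd r a c k l =
      cycProd r k (psum c (l-1)) (psum c l - 1) * tailProd r a c k (l+1) := by
  unfold tailProd
  have h1 : a + 1 - l = (a - l) + 1 := by omega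
  have h2 : a + 1 - (l+1) = a - l := by omega
  rw [h1, h2, List.range'_succ, List.map_cons, List.prod_cons]

lemma tailProd_last (r a : ℕ) (c k : ℕ → ℕ) : tailProd r a c k (a+1) = 1 := by
  unfold tailProd
  simp

set_option maxHeartbeats 1000000 in
lemma tail_mono (r a : ℕ) (c k : ℕ → ℕ) (ha : 2 ≤ a)
    (hc : ∀ j, 1 ≤ j → j ≤ a → 1 ≤ c j) (hcsum : psum c a = r + 1)
    (hka : ∀ i, psum c 1 ≤ i → i ≤ r → 1 ≤ k i ∧ k i ≤ i + 1)
    (hkb : ∀ j, 2 ≤ j → j ≤ a → ∀ i, psum c (j - 1) ≤ i → i + 1 ≤ psum c j - 1 →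
      k i < k (i + 1)) :
    ∀ t l, 2 ≤ l → l ≤ a + 1 → a + 1 ≤ l + t →
    ∀ u v : Fin (r+1), (u:ℕ) < (v:ℕ) →
    ((v:ℕ) < psum c (l-1) ∨
      ∃ j, l ≤ j ∧ j ≤ a ∧ psum c (j-1) ≤ (u:ℕ) ∧ (v:ℕ) < psum c j) →
    ((tailProd r a c k l)⁻¹ u : ℕ) < ((tailProd r a c k l)⁻¹ v : ℕ) := by
  intro t
  induction t with
  | zero =>
    intro l hl2 hla hal u v huv _
    have : l = a + 1 := by omega
    subst this
    rw [tailProd_last]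
    simpa using huv
  | succ t ih =>
    intro l hl2 hla hal u v huv hblock
    by_cases hl : a + 1 ≤ l + t
    · exact ih l hl2 hla hl u v huv hblock
    · have hlaa : l ≤ a := by omega
      set b := psum c (l-1) with hbdef
      set e := psum c l - 1 with hedef
      have hc1 : 1 ≤ c 1 := hc 1 le_rfl (by omega)
      have hc1b : psum c 1 ≤ b := psum_mono c (show (1:ℕ) ≤ l - 1 by omega)
      have hb1 : 1 ≤ b := by rw [psum_one] at hc1b; omega
      have hpl1 : 1 ≤ psum c l := le_trans hb1 (psum_mono c (by omega))
      have hple : psum c l ≤ r + 1 := by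
        have h := psum_mono c hlaa; omega
      have hblock_pos : b < psum c l := by
        have h1 := psum_succ c (l-1)
        have hll : l - 1 + 1 = l := by omega
        rw [hll] at h1
        have hcl : 1 ≤ c l := hc l (by omega) hlaa
        omega
      obtain ⟨Q1, Q4, Q2⟩ := structQ r b k hb1 e (by omega) (by omega)
        (fun i h1 h2 => hka i (le_trans hc1b h1) (by omega))
        (fun i j h1 h2 h3 => chainK b e k (fun i h1 h2 => hkb l hl2 hlaa i h1 (by omega)) j i h1 h2 h3)
      rw [tailProd_cons r a c k l hlaa, mul_inv_rev, Equiv.Perm.mul_apply,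
        Equiv.Perm.mul_apply]
      set W := tailProd r a c k (l+1)
      set P := cycProd r k b e
      have hll1 : l + 1 - 1 = l := by omega
      rcases hblock with hv | ⟨j, hj1, hj2, hj3, hj4⟩
      · obtain ⟨hlt, hle⟩ := Q2 u v huv hv
        apply ih (l+1) (by omega) (by omega) (by omega) _ _ hlt
        left
        rw [hll1]
        omega
      · by_cases hjl : j = l
        · have hj3l : b ≤ (u:ℕ) := by rw [hbdef]; exact hjl ▸ hj3
          have hj4l : (v:ℕ) < psum c l := by have := hjl ▸ hj4; exact this
          have hue : (u:ℕ) ≤ e := by omega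
          have hve : (v:ℕ) ≤ e := by omega
          have hvb : b ≤ (v:ℕ) := by omega
          have hku := hka (u:ℕ) (le_trans hc1b hj3l) (by omega)
          have hkv := hka (v:ℕ) (le_trans hc1b hvb) (by omega)
          have hkuv : k (u:ℕ) < k (v:ℕ) :=
            chainK b e k (fun i h1 h2 => hkb l hl2 hlaa i h1 (by omega))
              (v:ℕ) (u:ℕ) hj3l huv hve
          have hPu : P⁻¹ u = ⟨k (u:ℕ) - 1, by omega⟩ := by
            apply inv_eq_of
            apply Fin.ext
            exact Q4 (u:ℕ) ⟨k (u:ℕ) - 1, by omega⟩ hj3l hue (by show k (u:ℕ) - 1 + 1 = k (u:ℕ); omega)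
          have hPv : P⁻¹ v = ⟨k (v:ℕ) - 1, by omega⟩ := by
            apply inv_eq_of
            apply Fin.ext
            exact Q4 (v:ℕ) ⟨k (v:ℕ) - 1, by omega⟩ hvb hve (by show k (v:ℕ) - 1 + 1 = k (v:ℕ); omega)
          rw [hPu, hPv]
          exact ih (l+1) (by omega) (by omega) (by omega)
            ⟨k (u:ℕ) - 1, by omega⟩ ⟨k (v:ℕ) - 1, by omega⟩
            (by show k (u:ℕ) - 1 < k (v:ℕ) - 1; omega)
            (Or.inl (by show k (v:ℕ) - 1 < psum c (l + 1 - 1); rw [hll1]; omega))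
        · have hjl1 : l + 1 ≤ j := by omega
          have hub : psum c l ≤ (u:ℕ) := le_trans (psum_mono c (by omega)) hj3
          have hPu : P⁻¹ u = u := by
            apply inv_eq_of; apply Fin.ext; exact Q1 u (by omega)
          have hPv : P⁻¹ v = v := by
            apply inv_eq_of; apply Fin.ext; exact Q1 v (by omega)
          rw [hPu, hPv]
          apply ih (l+1) (by omega) (by omega) (by omega) u v huv
          right
          exact ⟨j, hjl1, hj2, hj3, hj4⟩
lemma finOf_val (r x : ℕ) (h : x ≤ r) : ((finOf r x : Fin (r+1)) : ℕ) = x := by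
  simp [finOf]
  omega

lemma exists_block (r a : ℕ) (c : ℕ → ℕ) (hcsum : psum c a = r + 1) (u : ℕ) (hu : u ≤ r) :
    ∃ j, 1 ≤ j ∧ j ≤ a ∧ psum c (j-1) ≤ u ∧ u < psum c j := by
  classical
  have hP : u < psum c a := by omega
  have hex : ∃ j, u < psum c j := ⟨a, hP⟩
  let j := Nat.find hex
  have hspec : u < psum c j := Nat.find_spec hex
  have hja : j ≤ a := Nat.find_le hP
  have hj0 : j ≠ 0 := by
    intro h0
    have : u < psum c 0 := by rw [← h0]; exact hspec
    simp [psum] at this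
  have hjm : ¬ u < psum c (j-1) := Nat.find_min hex (by omega)
  exact ⟨j, by omega, hja, by omega, hspec⟩

/-- if a string of consecutive simple roots `α_m, …, α_n` is longer
than `a − 1`, then `w = Π_2 ⋯ Π_a` sends one of them to a positive root. -/
theorem stmt14 (r a m n : ℕ) (hr : 1 ≤ r) (ha : 2 ≤ a) (c k : ℕ → ℕ)
    (hc : ∀ j, 1 ≤ j → j ≤ a → 1 ≤ c j) (hcsum : psum c a = r + 1)
    (hka : ∀ i, psum c 1 ≤ i → i ≤ r → 1 ≤ k i ∧ k i ≤ i + 1)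
    (hkb : ∀ j, 2 ≤ j → j ≤ a → ∀ i, psum c (j - 1) ≤ i → i + 1 ≤ psum c j - 1 →
      k i < k (i + 1))
    (hm : 1 ≤ m) (hmn : m ≤ n) (hn : n ≤ r)
    (hcount : a - 1 < n - m + 1) :
    ∃ l, m ≤ l ∧ l ≤ n ∧ posRoot r (tailProd r a c k 2) l := by
  by_contra hcon
  push_neg at hcon
  set w := tailProd r a c k 2 with hwdef
  have hdesc : ∀ l, m ≤ l → l ≤ n →
      (w (finOf r l) : ℕ) < (w (finOf r (l-1)) : ℕ) := by
    intro l hml hln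
    have hnp := hcon l hml hln
    unfold posRoot at hnp
    push_neg at hnp
    rcases Nat.lt_or_ge ((w (finOf r l) : ℕ)) ((w (finOf r (l-1)) : ℕ)) with h | h
    · exact h
    · exfalso
      have heq : (w (finOf r (l-1)) : ℕ) = (w (finOf r l) : ℕ) := by omega
      have heqf : w (finOf r (l-1)) = w (finOf r l) := Fin.ext heq
      have := w.injective heqf
      have h1 := finOf_val r (l-1) (by omega)
      have h2 := finOf_val r l (by omega)
      rw [Fin.ext_iff] at this
      omega
  -- block of w(finOf (n - t)) is at least 1 + t
  have claim : ∀ t, t ≤ n - m + 1 →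
      ∃ j, 1 ≤ j ∧ j ≤ a ∧ psum c (j-1) ≤ (w (finOf r (n-t)) : ℕ) ∧
        (w (finOf r (n-t)) : ℕ) < psum c j ∧ 1 + t ≤ j := by
    intro t
    induction t with
    | zero =>
      intro _
      obtain ⟨j, h1, h2, h3, h4⟩ := exists_block r a c hcsum (w (finOf r n) : ℕ)
        (by omega)
      exact ⟨j, h1, h2, h3, h4, by omega⟩
    | succ t iht =>
      intro ht
      have hl1 : m ≤ n - t := by clear * - ht hmn hm hn; omega
      have hl2 : n - t ≤ n := by clear * - ht; omega
      obtain ⟨j, hj1, hj2, hju, hjv, hjt⟩ := iht (by omega)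
      set uu := w (finOf r (n - t)) with huudef
      set vv := w (finOf r (n - (t+1))) with hvvdef
      have hstep : (uu : ℕ) < (vv : ℕ) := by
        have := hdesc (n - t) hl1 hl2
        have harith : n - t - 1 = n - (t+1) := by omega
        rw [harith] at this
        exact this
      obtain ⟨j', h'1, h'2, h'u, h'v⟩ := exists_block r a c hcsum (vv : ℕ) (by omega)
      have hjj : j + 1 ≤ j' := by
        rcases Nat.lt_or_ge j' j with hlt | hge
        · exfalso
          have : psum c j' ≤ psum c (j-1) := psum_mono c (by omega)
          omega
        · rcases Nat.lt_or_ge j j' with h | h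
          · clear * - h; omega
          · exfalso
            have hjj' : j' = j := by omega
            -- uu and vv in the same block j: contradiction with tail_mono
            have hmono := tail_mono r a c k ha hc hcsum hka hkb (a-1) 2
              (le_refl 2) (by omega) (by omega) uu vv hstep
            have hblk : (vv:ℕ) < psum c (2-1) ∨
                ∃ jj, 2 ≤ jj ∧ jj ≤ a ∧ psum c (jj-1) ≤ (uu:ℕ) ∧ (vv:ℕ) < psum c jj := by
              rcases Nat.lt_or_ge j 2 with hj2' | hj2'
              · left
                have hj1' : j = 1 := by omega
                have : psum c j' ≤ psum c 1 := psum_mono c (by omega)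
                have h21 : (2:ℕ) - 1 = 1 := by omega
                rw [h21]
                omega
              · right
                exact ⟨j, hj2', hj2, hju, by rw [hjj'] at h'v; exact h'v⟩
            have hfin := hmono hblk
            rw [← hwdef] at hfin
            rw [Equiv.Perm.coe_inv, Equiv.symm_apply_apply, Equiv.symm_apply_apply] at hfin
            have e1 := finOf_val r (n - t) (by clear * - hn; omega)
            have e2 := finOf_val r (n - (t+1)) (by clear * - hn; omega)
            clear * - hfin e1 e2
            omega
      refine ⟨j', by clear * - h'1; omega, h'2, h'u, h'v, by clear * - hjj hjt; omega⟩
  obtain ⟨j, h1, h2, h3, h4, h5⟩ := claim (n - m + 1) le_rfl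
  omega
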